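/- Let k ≥ 1 and let (y_n) be a sequence of complex numbers satisfying the linear recurrence y_{n+k} = ∑_{j=0}^{k-1} a_{j,n} y_{n+j} for all n ≥ 0, where the complex coefficients satisfy a_{j,n} → a_j as n → ∞ for each 0 ≤ j < k. Suppose the characteristic equation z^k = ∑_{j=0}^{k-1} a_j z^j has k roots ξ_1, …, ξ_k whose absolute values are pairwise distinct. Then either there exists n_0 such that y_n = 0 for all n ≥ n_0, or there exists a root ξ_ℓ of the characteristic equation such that y_n ≠ 0 for all sufficiently large n and y_{n+1}/y_n → ξ_ℓ. (Poincaré's theorem.) -/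

import Mathlib

set_option maxHeartbeats 2000000
open Filter Topology

lemma aux_ev_const {k : ℕ} (r : Fin k → ℝ) (hr : Function.Injective r)
    (ℓ : ℕ → Fin k) (N : ℕ) (mono : ∀ n ≥ N, r (ℓ n) ≤ r (ℓ (n + 1))) :
    ∃ L N₁, N ≤ N₁ ∧ ∀ n ≥ N₁, ℓ n = L := by
  have hmono : ∀ n₁ n₂, N ≤ n₁ → n₁ ≤ n₂ → r (ℓ n₁) ≤ r (ℓ n₂) := by
    intro n₁ n₂ h1 h12
    induction n₂, h12 using Nat.le_induction with
    | base => exact le_refl _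
    | succ n₂ hle ih => exact le_trans ih (mono n₂ (le_trans h1 hle))
  obtain ⟨L, hL⟩ := Finite.exists_infinite_fiber ℓ
  have hinf : {n | ℓ n = L}.Infinite := by
    rw [← Set.infinite_coe_iff]
    exact hL
  obtain ⟨N₁, hN₁mem, hN₁⟩ := hinf.exists_gt N
  refine ⟨L, N₁, le_of_lt hN₁, fun n hn => ?_⟩
  apply hr
  have h1 : r (ℓ N₁) ≤ r (ℓ n) := hmono N₁ n (le_of_lt hN₁) hn
  obtain ⟨n₂, hn₂mem, hn₂⟩ := hinf.exists_gt n
  have h2 : r (ℓ n) ≤ r (ℓ n₂) := hmono n n₂ (le_trans (le_of_lt hN₁) hn) (le_of_lt hn₂)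
  have e1 : ℓ N₁ = L := hN₁mem
  have e2 : ℓ n₂ = L := hn₂mem
  rw [e1] at h1
  rw [e2] at h2
  exact le_antisymm h2 h1

theorem poincare_ratio_theorem
    (k : ℕ) (hk : 1 ≤ k)
    (y : ℕ → ℂ) (A : Fin k → ℕ → ℂ) (α : Fin k → ℂ)
    (hrec : ∀ n : ℕ, y (n + k) = ∑ j : Fin k, A j n * y (n + (j : ℕ)))
    (hlim : ∀ j : Fin k, Tendsto (A j) atTop (nhds (α j)))
    (ξ : Fin k → ℂ)
    (hroot : ∀ i : Fin k, ξ i ^ k = ∑ j : Fin k, α j * ξ i ^ (j : ℕ))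
    (hdist : ∀ i j : Fin k, i ≠ j → ‖ξ i‖ ≠ ‖ξ j‖) :
    (∃ n₀ : ℕ, ∀ n ≥ n₀, y n = 0) ∨
      ∃ l : Fin k, (∃ N : ℕ, ∀ n ≥ N, y n ≠ 0) ∧
        Tendsto (fun n => y (n + 1) / y n) atTop (nhds (ξ l)) := by
  classical
  by_cases hA : ∃ n₀ : ℕ, ∀ j : Fin k, y (n₀ + (j : ℕ)) = 0
  · left
    obtain ⟨n₀, h0⟩ := hA
    refine ⟨n₀, fun n hn => ?_⟩
    induction n using Nat.strong_induction_on with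
    | _ n ih =>
      rcases lt_or_ge n (n₀ + k) with h | h
      · have hn' : n = n₀ + (n - n₀) := by omega
        rw [hn']
        exact h0 ⟨n - n₀, by omega⟩
      · have hn' : n = (n - k) + k := by omega
        rw [hn', hrec (n - k)]
        apply Finset.sum_eq_zero
        intro j _
        rw [ih (n - k + j) (by omega) (by have := j.isLt; omega)]
        ring
  · right
    push_neg at hA
    -- injectivity of ξ
    have hinj : Function.Injective ξ := by
      intro i j h
      by_contra hne
      exact hdist i j hne (congrArg (fun z : ℂ => ‖z‖) h)
    set M : Matrix (Fin k) (Fin k) ℂ := (Matrix.vandermonde ξ).transpose with hMdef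
    have hMa : ∀ p i : Fin k, M p i = ξ i ^ (p : ℕ) := fun p i => rfl
    have hdet : IsUnit M.det := by
      rw [hMdef, Matrix.det_transpose, Matrix.det_vandermonde]
      rw [isUnit_iff_ne_zero]
      apply Finset.prod_ne_zero_iff.2
      intro i _
      apply Finset.prod_ne_zero_iff.2
      intro j hj
      have : j ≠ i := (Finset.mem_Ioi.1 hj).ne'
      exact sub_ne_zero_of_ne fun h => this (hinj h)
    have hMM : M * M⁻¹ = 1 := Matrix.mul_nonsing_inv M hdet
    set u : ℕ → Fin k → ℂ := fun n p => y (n + (p : ℕ)) with hudef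
    set w : ℕ → Fin k → ℂ := fun n => M⁻¹.mulVec (u n) with hwdef
    have hcancel : ∀ v : Fin k → ℂ, M⁻¹.mulVec (M.mulVec v) = v := by
      intro v
      rw [Matrix.mulVec_mulVec, Matrix.nonsing_inv_mul M hdet, Matrix.one_mulVec]
    have hMw : ∀ n, M.mulVec (w n) = u n := by
      intro n
      rw [hwdef, Matrix.mulVec_mulVec, hMM, Matrix.one_mulVec]
    have hy : ∀ (n : ℕ) (p : Fin k), y (n + (p : ℕ)) = ∑ i, ξ i ^ (p : ℕ) * w n i := by
      intro n p
      have := congrFun (hMw n) p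
      rw [hudef] at this
      simpa [Matrix.mulVec, dotProduct, hMa] using this.symm
    set la : Fin k := ⟨k - 1, by omega⟩ with hladef
    set c : Fin k → ℂ := fun i => M⁻¹ i la with hcdef
    set δ : ℕ → ℂ := fun n => ∑ j : Fin k, (A j n - α j) * y (n + (j : ℕ)) with hδdef
    have hMc : ∀ p : Fin k, (∑ i, ξ i ^ (p : ℕ) * c i) = if p = la then 1 else 0 := by
      intro p
      have : (∑ i, ξ i ^ (p : ℕ) * c i) = (M * M⁻¹) p la := by
        rw [Matrix.mul_apply]
        simp [hMa, hcdef]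
      rw [this, hMM, Matrix.one_apply]
    -- the key perturbed-diagonal recurrence
    have hw : ∀ n, w (n + 1) = fun i => ξ i * w n i + c i * δ n := by
      intro n
      have key : M.mulVec (fun i => ξ i * w n i + c i * δ n) = u (n + 1) := by
        funext p
        have expand : M.mulVec (fun i => ξ i * w n i + c i * δ n) p
            = (∑ i, ξ i ^ ((p : ℕ) + 1) * w n i) + δ n * (∑ i, ξ i ^ (p : ℕ) * c i) := by
          simp only [Matrix.mulVec, dotProduct, hMa, mul_add, Finset.sum_add_distrib,
            Finset.mul_sum, Finset.sum_mul]
          congr 1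
          · apply Finset.sum_congr rfl; intro i _; ring
          · apply Finset.sum_congr rfl; intro i _; ring
        rw [expand, hMc]
        by_cases hp : p = la
        · subst hp
          have hkk : (la : ℕ) + 1 = k := by simp [hladef]; omega
          rw [hkk]
          have : (∑ i, ξ i ^ k * w n i) = ∑ j : Fin k, α j * y (n + (j : ℕ)) := by
            calc (∑ i, ξ i ^ k * w n i) = ∑ i, (∑ j : Fin k, α j * ξ i ^ (j : ℕ)) * w n i := by
                  apply Finset.sum_congr rfl; intro i _; rw [hroot i]
            _ = ∑ i, ∑ j : Fin k, α j * ξ i ^ (j : ℕ) * w n i := by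
                  apply Finset.sum_congr rfl; intro i _; rw [Finset.sum_mul]
            _ = ∑ j : Fin k, ∑ i, α j * ξ i ^ (j : ℕ) * w n i := Finset.sum_comm
            _ = ∑ j : Fin k, α j * ∑ i, ξ i ^ (j : ℕ) * w n i := by
                  apply Finset.sum_congr rfl; intro j _
                  rw [Finset.mul_sum]
                  apply Finset.sum_congr rfl; intro i _; ring
            _ = ∑ j : Fin k, α j * y (n + (j : ℕ)) := by
                  apply Finset.sum_congr rfl; intro j _; rw [hy n j]
          rw [this]
          have : u (n + 1) la = y (n + k) := by
            rw [hudef]; simp only [hladef]; congr 1; omega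
          rw [this, hrec n, hδdef, if_pos rfl, mul_one, ← Finset.sum_add_distrib]
          apply Finset.sum_congr rfl; intro j _; ring
        · have hplt : (p : ℕ) + 1 < k := by
            have := p.isLt
            rcases Nat.lt_or_ge ((p : ℕ) + 1) k with h | h
            · exact h
            · exfalso; apply hp; apply Fin.ext; simp [hladef]; omega
          have : (∑ i, ξ i ^ ((p : ℕ) + 1) * w n i) = y (n + ((p : ℕ) + 1)) := by
            have := hy n ⟨(p : ℕ) + 1, hplt⟩
            simpa using this.symm
          rw [if_neg hp, this, hudef]
          simp only [mul_zero, add_zero]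
          congr 1
          omega
      have : w (n + 1) = M⁻¹.mulVec (M.mulVec (fun i => ξ i * w n i + c i * δ n)) := by
        rw [key, hwdef]
      rw [this, hcancel]
    -- analytic setup
    have hne : (Finset.univ : Finset (Fin k)).Nonempty := ⟨⟨0, hk⟩, Finset.mem_univ _⟩
    set r : Fin k → ℝ := fun i => ‖ξ i‖ with hrdef
    have hrinj : Function.Injective r := by
      intro i j h
      by_contra hne'
      exact hdist i j hne' h
    set m : ℕ → ℝ := fun n => Finset.univ.sup' hne (fun i => ‖w n i‖) with hmdef
    have hle : ∀ (n : ℕ) (i : Fin k), ‖w n i‖ ≤ m n := by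
      intro n i
      simp only [hmdef]
      exact Finset.le_sup' (fun i => ‖w n i‖) (Finset.mem_univ i)
    have hmpos : ∀ n, 0 < m n := by
      intro n
      obtain ⟨j, hj⟩ := hA n
      have hwne : ∃ i, w n i ≠ 0 := by
        by_contra h
        push_neg at h
        have hw0 : w n = 0 := funext h
        have h2 := hMw n
        rw [hw0, Matrix.mulVec_zero] at h2
        exact hj (by simpa using (congrFun h2 j).symm)
      obtain ⟨i, hi⟩ := hwne
      exact lt_of_lt_of_le (norm_pos_iff.mpr hi) (hle n i)
    have hmnn : ∀ n, 0 ≤ m n := fun n => (hmpos n).le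
    set K : ℝ := ∑ p : Fin k, ∑ i : Fin k, ‖ξ i ^ (p : ℕ)‖ with hKdef
    have hKnn : 0 ≤ K := Finset.sum_nonneg fun p _ => Finset.sum_nonneg fun i _ =>
      (norm_nonneg _)
    have hyb : ∀ (n : ℕ) (p : Fin k), ‖y (n + (p : ℕ))‖ ≤ K * m n := by
      intro n p
      rw [hy n p]
      calc ‖∑ i, ξ i ^ (p : ℕ) * w n i‖
          ≤ ∑ i, ‖ξ i ^ (p : ℕ) * w n i‖ := norm_sum_le _ _
        _ ≤ ∑ i, ‖ξ i ^ (p : ℕ)‖ * m n := by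
            apply Finset.sum_le_sum
            intro i _
            rw [norm_mul]
            exact mul_le_mul_of_nonneg_left (hle n i) (norm_nonneg _)
        _ = (∑ i, ‖ξ i ^ (p : ℕ)‖) * m n := by rw [Finset.sum_mul]
        _ ≤ K * m n := by
            apply mul_le_mul_of_nonneg_right _ (hmnn n)
            exact Finset.single_le_sum (f := fun p : Fin k => ∑ i, ‖ξ i ^ (p : ℕ)‖)
              (fun q _ => Finset.sum_nonneg fun i _ => norm_nonneg _) (Finset.mem_univ p)
    set e : ℕ → ℝ := fun n => ∑ j : Fin k, ‖A j n - α j‖ with hedef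
    have henn : ∀ n, 0 ≤ e n := fun n => Finset.sum_nonneg fun j _ => norm_nonneg _
    have he0 : Tendsto e atTop (nhds 0) := by
      have : Tendsto (fun n => ∑ j : Fin k, ‖A j n - α j‖) atTop
          (nhds (∑ j : Fin k, (0 : ℝ))) := by
        apply tendsto_finset_sum
        intro j _
        have h1 : Tendsto (fun n => A j n - α j) atTop (nhds 0) := by
          simpa using (hlim j).sub (tendsto_const_nhds (x := α j))
        have h2 : Tendsto (fun n => ‖A j n - α j‖) atTop (nhds 0) := by
          simpa using h1.norm
        simpa using h2
      simpa using this
    have hδb : ∀ n, ‖δ n‖ ≤ e n * (K * m n) := by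
      intro n
      rw [hδdef, hedef]
      calc ‖∑ j : Fin k, (A j n - α j) * y (n + (j : ℕ))‖
          ≤ ∑ j : Fin k, ‖(A j n - α j) * y (n + (j : ℕ))‖ := norm_sum_le _ _
        _ ≤ ∑ j : Fin k, ‖A j n - α j‖ * (K * m n) := by
            apply Finset.sum_le_sum
            intro j _
            rw [norm_mul]
            exact mul_le_mul_of_nonneg_left (hyb n j) (norm_nonneg _)
        _ = (∑ j : Fin k, ‖A j n - α j‖) * (K * m n) := (Finset.sum_mul _ _ _).symm
    set C : ℝ := ∑ i : Fin k, ‖c i‖ with hCdef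
    have hCnn : 0 ≤ C := Finset.sum_nonneg fun i _ => norm_nonneg _
    have hcb : ∀ i, ‖c i‖ ≤ C :=
      fun i => Finset.single_le_sum (fun q _ => norm_nonneg _) (Finset.mem_univ i)
    set ε : ℕ → ℝ := fun n => C * K * e n with hεdef
    have hεnn : ∀ n, 0 ≤ ε n := fun n => mul_nonneg (mul_nonneg hCnn hKnn) (henn n)
    have hε0 : Tendsto ε atTop (nhds 0) := by
      simpa using he0.const_mul (C * K)
    have hP : ∀ (n : ℕ) (i : Fin k), ‖w (n + 1) i - ξ i * w n i‖ ≤ ε n * m n := by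
      intro n i
      have hid : w (n + 1) i - ξ i * w n i = c i * δ n := by
        rw [hw n]
        ring
      rw [hid, norm_mul]
      calc ‖c i‖ * ‖δ n‖ ≤ C * (e n * (K * m n)) :=
            mul_le_mul (hcb i) (hδb n) (norm_nonneg _) hCnn
        _ = C * K * e n * m n := by ring
    have hub : ∀ (n : ℕ) (i : Fin k),
        ‖w (n + 1) i‖ ≤ r i * ‖w n i‖ + ε n * m n := by
      intro n i
      calc ‖w (n + 1) i‖
          = ‖ξ i * w n i + (w (n + 1) i - ξ i * w n i)‖ := by ring_nf
        _ ≤ ‖ξ i * w n i‖ + ‖w (n + 1) i - ξ i * w n i‖ :=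
            norm_add_le _ _
        _ ≤ r i * ‖w n i‖ + ε n * m n := by
            rw [norm_mul]
            exact add_le_add le_rfl (hP n i)
    have hlb : ∀ (n : ℕ) (i : Fin k),
        r i * ‖w n i‖ - ε n * m n ≤ ‖w (n + 1) i‖ := by
      intro n i
      have h3 : ‖ξ i * w n i‖
          ≤ ‖w (n + 1) i‖ + ‖w (n + 1) i - ξ i * w n i‖ := by
        have h4 := norm_add_le (w (n + 1) i) (ξ i * w n i - w (n + 1) i)
        have h5 : w (n + 1) i + (ξ i * w n i - w (n + 1) i) = ξ i * w n i := by ring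
        rw [h5] at h4
        have h6 : ‖ξ i * w n i - w (n + 1) i‖
            = ‖w (n + 1) i - ξ i * w n i‖ := by
          rw [← neg_sub (w (n + 1) i) (ξ i * w n i), norm_neg]
        rw [h6] at h4
        exact h4
      rw [norm_mul] at h3
      have hri : ‖ξ i‖ = r i := rfl
      rw [hri] at h3
      linarith [hP n i]
    -- the modulus gap
    set g : ℝ := (Finset.univ ×ˢ Finset.univ : Finset (Fin k × Fin k)).inf'
      (Finset.nonempty_product.2 ⟨hne, hne⟩)
      (fun p => if p.1 = p.2 then 1 else |r p.1 - r p.2|) with hgdef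
    have hg0 : 0 < g := by
      rw [hgdef, Finset.lt_inf'_iff]
      intro p _
      by_cases hp : p.1 = p.2
      · rw [if_pos hp]; norm_num
      · rw [if_neg hp]
        have : r p.1 ≠ r p.2 := fun h => hp (hrinj h)
        exact abs_pos.2 (sub_ne_zero_of_ne this)
    have hgle : ∀ i j : Fin k, i ≠ j → g ≤ |r i - r j| := by
      intro i j hij
      have := Finset.inf'_le (f := fun p : Fin k × Fin k => if p.1 = p.2 then 1 else |r p.1 - r p.2|)
        (b := (i, j)) (Finset.mem_product.2 ⟨Finset.mem_univ _, Finset.mem_univ _⟩)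
      rw [if_neg hij] at this
      exact this
    -- dominant index selection
    have hsel : ∀ n, ∃ i, ‖w n i‖ = m n ∧
        ∀ i', ‖w n i'‖ = m n → r i' ≤ r i := by
      intro n
      have hfne : (Finset.univ.filter (fun i => ‖w n i‖ = m n)).Nonempty := by
        obtain ⟨i, _, hieq⟩ := Finset.exists_mem_eq_sup' hne (fun i => ‖w n i‖)
        exact ⟨i, Finset.mem_filter.2 ⟨Finset.mem_univ _, hieq.symm⟩⟩
      obtain ⟨b, hb, hbs⟩ := Finset.exists_max_image _ r hfne
      exact ⟨b, (Finset.mem_filter.1 hb).2,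
        fun i' h => hbs i' (Finset.mem_filter.2 ⟨Finset.mem_univ _, h⟩)⟩
    choose ℓ hℓm hℓmax using hsel
    -- stage where ε is below the half-gap
    obtain ⟨N, hN⟩ := eventually_atTop.1 (hε0.eventually_lt_const (by linarith : (0:ℝ) < g / 2))
    -- dominance is monotone in modulus
    have CL1 : ∀ n ≥ N, r (ℓ n) ≤ r (ℓ (n + 1)) := by
      intro n hn
      by_contra hcon
      push_neg at hcon
      have hne2 : ℓ n ≠ ℓ (n + 1) := fun h => absurd (congrArg r h) (by intro h2; rw [h2] at hcon; exact lt_irrefl _ hcon)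
      have hgap : g ≤ r (ℓ n) - r (ℓ (n + 1)) := by
        have := hgle (ℓ n) (ℓ (n + 1)) hne2
        rwa [abs_of_pos (by linarith)] at this
      have h1 : (r (ℓ n) - ε n) * m n ≤ ‖w (n + 1) (ℓ n)‖ := by
        have := hlb n (ℓ n)
        rw [hℓm n] at this
        linarith [this]
      have h2 : ‖w (n + 1) (ℓ (n + 1))‖ ≤ (r (ℓ (n + 1)) + ε n) * m n := by
        have hu := hub n (ℓ (n + 1))
        have : r (ℓ (n + 1)) * ‖w n (ℓ (n + 1))‖ ≤ r (ℓ (n + 1)) * m n :=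
          mul_le_mul_of_nonneg_left (hle n _) (norm_nonneg _)
        have h2' : r (ℓ (n+1)) * m n + ε n * m n = (r (ℓ (n+1)) + ε n) * m n := by ring
        linarith
      have hlt : (r (ℓ (n + 1)) + ε n) * m n < (r (ℓ n) - ε n) * m n := by
        apply mul_lt_mul_of_pos_right _ (hmpos n)
        have := hN n hn
        linarith
      have hm1 : ‖w (n + 1) (ℓ n)‖ ≤ m (n + 1) := hle (n + 1) _
      rw [hℓm (n + 1)] at h2
      linarith
    obtain ⟨L, N₁, hN₁N, hLc⟩ := aux_ev_const r hrinj ℓ N CL1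
    have hdom : ∀ n ≥ N₁, ‖w n L‖ = m n := by
      intro n hn
      rw [← hLc n hn]
      exact hℓm n
    have hεlt : ∀ n ≥ N₁, ε n < g / 2 := fun n hn => hN n (le_trans hN₁N hn)
    -- bounds on m along the dominant direction
    have hmub : ∀ n ≥ N₁, m (n + 1) ≤ (r L + ε n) * m n := by
      intro n hn
      rw [← hdom (n + 1) (by omega)]
      have hu := hub n L
      have : r L * ‖w n L‖ ≤ r L * m n :=
        mul_le_mul_of_nonneg_left (hle n _) (norm_nonneg _)
      have h2' : r L * m n + ε n * m n = (r L + ε n) * m n := by ring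
      linarith
    have hmlb : ∀ n ≥ N₁, (r L - ε n) * m n ≤ m (n + 1) := by
      intro n hn
      have := hlb n L
      rw [hdom n hn] at this
      have hm1 : ‖w (n + 1) L‖ ≤ m (n + 1) := hle (n + 1) _
      nlinarith [this, hm1]
    -- off-dominant coordinates are small
    have hsmall : ∀ j : Fin k, j ≠ L → ∀ d : ℝ, 0 < d →
        ∃ N₂, ∀ n ≥ N₂, ‖w n j‖ < d * m n := by
      intro j hjL d hd
      have hrne : r j ≠ r L := hdist j L hjL
      rcases lt_or_gt_of_ne hrne with hlt | hgt
      · -- r j < r L : contraction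
        set Δ : ℝ := r L - r j with hΔdef
        have hΔ : 0 < Δ := by rw [hΔdef]; linarith
        have hrj : 0 ≤ r j := norm_nonneg _
        have hrL : 0 < r L := by linarith
        set ε' : ℝ := min (d * Δ / 4) (Δ / 2) with hε'def
        have hε'0 : 0 < ε' := lt_min (by positivity) (by positivity)
        have hε'Δ : ε' ≤ Δ / 2 := min_le_right _ _
        have hε'd : ε' ≤ d * Δ / 4 := min_le_left _ _
        have hden : 0 < r L - ε' := by
          have : Δ ≤ r L := by rw [hΔdef]; linarith
          linarith
        set q : ℝ := r j / (r L - ε') with hqdef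
        set B : ℝ := ε' / (r L - ε' - r j) with hBdef
        have hdenB : 0 < r L - ε' - r j := by
          have h := hε'Δ
          rw [hΔdef] at h
          have h2 : r L - r j = Δ := by rw [hΔdef]
          linarith
        have hq0 : 0 ≤ q := div_nonneg hrj hden.le
        have hq1 : q < 1 := (div_lt_one hden).2 (by linarith)
        have hB0 : 0 ≤ B := div_nonneg hε'0.le hdenB.le
        have hBd : B ≤ d / 2 := by
          rw [hBdef, div_le_iff₀ hdenB]
          have h1 : ε' ≤ d * Δ / 4 := hε'd
          have h2 : Δ / 2 ≤ r L - ε' - r j := by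
            have h3 : r L - r j = Δ := by rw [hΔdef]
            linarith
          nlinarith
        obtain ⟨N₂', hN₂'⟩ := eventually_atTop.1 (hε0.eventually_lt_const hε'0)
        set N₂ : ℕ := max N₂' N₁ with hN₂def
        have hN₂N₁ : N₁ ≤ N₂ := le_max_right _ _
        have hN₂ε : ∀ n ≥ N₂, ε n ≤ ε' := fun n hn => (hN₂' n (le_trans (le_max_left _ _) hn)).le
        have key : ∀ p : ℕ, ‖w (N₂ + p) j‖ ≤ (q ^ p + B) * m (N₂ + p) := by
          intro p
          induction p with
          | zero =>
            simp only [pow_zero, Nat.add_zero]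
            have := hle N₂ j
            nlinarith [hmpos N₂]
          | succ p ih =>
            have hn : N₂ + p ≥ N₁ := by omega
            set n := N₂ + p with hndef
            have hεn : ε n ≤ ε' := hN₂ε n (by omega)
            have step1 : ‖w (n + 1) j‖ ≤ (r j * (q ^ p + B) + ε') * m n := by
              have h1 := hub n j
              have h2 : r j * ‖w n j‖ ≤ r j * ((q ^ p + B) * m n) :=
                mul_le_mul_of_nonneg_left ih hrj
              have h3 : ε n * m n ≤ ε' * m n := mul_le_mul_of_nonneg_right hεn (hmnn n)
              nlinarith
            have alg : r j * (q ^ p + B) + ε' = (q ^ (p + 1) + B) * (r L - ε') := by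
              have hq' : q * (r L - ε') = r j := by rw [hqdef]; exact div_mul_cancel₀ _ hden.ne'
              have hB' : B * (r L - ε' - r j) = ε' := by rw [hBdef]; exact div_mul_cancel₀ _ hdenB.ne'
              linear_combination -(q ^ p) * hq' - hB'
            have step2 : (q ^ (p + 1) + B) * ((r L - ε') * m n) ≤ (q ^ (p + 1) + B) * m (n + 1) := by
              apply mul_le_mul_of_nonneg_left
              · exact le_trans (mul_le_mul_of_nonneg_right (by linarith : r L - ε' ≤ r L - ε n)
                  (hmnn n)) (hmlb n hn)
              · positivity
            calc ‖w (n + 1) j‖ ≤ (r j * (q ^ p + B) + ε') * m n := step1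
              _ = (q ^ (p + 1) + B) * ((r L - ε') * m n) := by rw [alg]; ring
              _ ≤ (q ^ (p + 1) + B) * m (n + 1) := step2
        have hq0' : Tendsto (fun p : ℕ => q ^ p) atTop (nhds 0) :=
          tendsto_pow_atTop_nhds_zero_of_lt_one hq0 hq1
        obtain ⟨P, hP'⟩ := eventually_atTop.1 (hq0'.eventually_lt_const (by linarith : (0:ℝ) < d / 2))
        refine ⟨N₂ + P, fun n hn => ?_⟩
        obtain ⟨p', rfl⟩ : ∃ p', n = N₂ + p' := ⟨n - N₂, by omega⟩
        have hPle : P ≤ p' := by omega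
        calc ‖w (N₂ + p') j‖ ≤ (q ^ p' + B) * m (N₂ + p') := key p'
          _ < d * m (N₂ + p') := by
            apply mul_lt_mul_of_pos_right _ (hmpos _)
            have := hP' p' hPle
            linarith
      · -- r j > r L : expansion, contradiction with boundedness
        set Δ : ℝ := r j - r L with hΔdef
        have hΔ : 0 < Δ := by rw [hΔdef]; linarith
        have hrL : 0 ≤ r L := norm_nonneg _
        set d' : ℝ := min d 1 with hd'def
        have hd'0 : 0 < d' := lt_min hd (by norm_num)
        have hd'1 : d' ≤ 1 := min_le_right _ _
        set ε' : ℝ := d' * Δ / 4 with hε'def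
        have hε'0 : 0 < ε' := by positivity
        set κ : ℝ := (r j - Δ / 4) / (r L + Δ / 4) with hκdef
        have hdenκ : 0 < r L + Δ / 4 := by linarith
        have hnumκ : r L + Δ / 4 < r j - Δ / 4 := by rw [hΔdef]; linarith
        have hκ1 : 1 < κ := (one_lt_div hdenκ).2 hnumκ
        obtain ⟨N₂', hN₂'⟩ := eventually_atTop.1 (hε0.eventually_lt_const hε'0)
        set N₂ : ℕ := max N₂' N₁ with hN₂def
        have hN₂N₁ : N₁ ≤ N₂ := le_max_right _ _
        have hN₂ε : ∀ n ≥ N₂, ε n ≤ ε' := fun n hn => (hN₂' n (le_trans (le_max_left _ _) hn)).le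
        refine ⟨N₂, fun n hn => ?_⟩
        by_contra hcon
        push_neg at hcon
        have hstart : d' * m n ≤ ‖w n j‖ := by
          have : d' * m n ≤ d * m n := mul_le_mul_of_nonneg_right (min_le_left _ _) (hmnn n)
          linarith
        have grow : ∀ p : ℕ, κ ^ p * (d' * m (n + p)) ≤ ‖w (n + p) j‖ := by
          intro p
          induction p with
          | zero => simpa using hstart
          | succ p ih =>
            have hnp : n + p ≥ N₁ := by omega
            have hεnp : ε (n + p) ≤ ε' := hN₂ε (n + p) (by omega)
            have hκp1 : 1 ≤ κ ^ p := one_le_pow₀ hκ1.le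
            have hwlb : d' * m (n + p) ≤ ‖w (n + p) j‖ := by
              have h0 : 0 ≤ d' * m (n + p) := mul_nonneg hd'0.le (hmnn _)
              have : d' * m (n + p) ≤ κ ^ p * (d' * m (n + p)) :=
                le_mul_of_one_le_left h0 hκp1
              linarith
            have hεm : ε (n + p) * m (n + p) ≤ (Δ / 4) * ‖w (n + p) j‖ := by
              have h1 : ε (n + p) * m (n + p) ≤ ε' * m (n + p) :=
                mul_le_mul_of_nonneg_right hεnp (hmnn _)
              have h2 : ε' * m (n + p) = (Δ / 4) * (d' * m (n + p)) := by rw [hε'def]; ring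
              have h3 : (Δ / 4) * (d' * m (n + p)) ≤ (Δ / 4) * ‖w (n + p) j‖ :=
                mul_le_mul_of_nonneg_left hwlb (by linarith)
              linarith
            have hwlb2 : (r j - Δ / 4) * ‖w (n + p) j‖
                ≤ ‖w (n + p + 1) j‖ := by
              have := hlb (n + p) j
              linarith
            have hmub2 : m (n + p + 1) ≤ (r L + Δ / 4) * m (n + p) := by
              have h1 := hmub (n + p) hnp
              have : (r L + ε (n + p)) * m (n + p) ≤ (r L + Δ / 4) * m (n + p) := by
                apply mul_le_mul_of_nonneg_right _ (hmnn _)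
                have : ε' ≤ Δ / 4 := by
                  rw [hε'def]
                  nlinarith
                linarith
              linarith
            have halg : κ * (r L + Δ / 4) = r j - Δ / 4 := by
              rw [hκdef]
              field_simp
            calc κ ^ (p + 1) * (d' * m (n + p + 1))
                ≤ κ ^ (p + 1) * (d' * ((r L + Δ / 4) * m (n + p))) := by
                  apply mul_le_mul_of_nonneg_left
                  · exact mul_le_mul_of_nonneg_left hmub2 hd'0.le
                  · positivity
              _ = (r j - Δ / 4) * (κ ^ p * (d' * m (n + p))) := by
                  rw [pow_succ, ← halg]
                  ring
              _ ≤ (r j - Δ / 4) * ‖w (n + p) j‖ := by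
                  apply mul_le_mul_of_nonneg_left ih (by linarith)
              _ ≤ ‖w (n + p + 1) j‖ := hwlb2
        obtain ⟨p, hp⟩ := pow_unbounded_of_one_lt (1 / d') hκ1
        have h1 : κ ^ p * (d' * m (n + p)) ≤ m (n + p) := le_trans (grow p) (hle _ _)
        have h2 : m (n + p) < κ ^ p * (d' * m (n + p)) := by
          have h3 : 1 < κ ^ p * d' := (div_lt_iff₀ hd'0).1 hp
          nlinarith [hmpos (n + p)]
        linarith
    -- final assembly
    have hWne : ∀ n ≥ N₁, w n L ≠ 0 := by
      intro n hn h0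
      have hd := hdom n hn
      rw [h0, norm_zero] at hd
      exact absurd hd.symm (ne_of_gt (hmpos n))
    have hone : Tendsto (fun n => w n L / w n L) atTop (nhds 1) := by
      apply Tendsto.congr' (f₁ := fun _ => (1 : ℂ))
      · rw [EventuallyEq, eventually_atTop]
        exact ⟨N₁, fun n hn => (div_self (hWne n hn)).symm⟩
      · exact tendsto_const_nhds
    have hs : ∀ j : Fin k, j ≠ L → Tendsto (fun n => w n j / w n L) atTop (nhds 0) := by
      intro j hjL
      rw [NormedAddCommGroup.tendsto_nhds_zero]
      intro d hd
      obtain ⟨N₂, hN₂⟩ := hsmall j hjL d hd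
      rw [eventually_atTop]
      refine ⟨max N₂ N₁, fun n hn => ?_⟩
      have hn1 : n ≥ N₁ := le_trans (le_max_right _ _) hn
      have hn2 : n ≥ N₂ := le_trans (le_max_left _ _) hn
      rw [norm_div, hdom n hn1,
        div_lt_iff₀ (hmpos n)]
      exact hN₂ n hn2
    have hsL : ∀ i : Fin k, Tendsto (fun n => w n i / w n L) atTop
        (nhds (if i = L then 1 else 0)) := by
      intro i
      by_cases hi : i = L
      · subst hi; rw [if_pos rfl]; exact hone
      · rw [if_neg hi]; exact hs i hi
    have hy0 : ∀ n, y n = ∑ i, w n i := by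
      intro n
      have h0 := hy n ⟨0, hk⟩
      simpa using h0
    have hy1 : ∀ n, y (n + 1) = (∑ i, ξ i * w n i) + (∑ i, c i) * δ n := by
      intro n
      have h1 : y (n + 1) = ∑ i, w (n + 1) i := hy0 (n + 1)
      rw [h1, hw n, Finset.sum_add_distrib, Finset.sum_mul]
    have hyW : Tendsto (fun n => y n / w n L) atTop (nhds 1) := by
      have hsum : Tendsto (fun n => ∑ i, w n i / w n L) atTop
          (nhds (∑ i : Fin k, if i = L then (1:ℂ) else 0)) :=
        tendsto_finset_sum _ fun i _ => hsL i
      have hval : (∑ i : Fin k, if i = L then (1:ℂ) else 0) = 1 := by simp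
      rw [hval] at hsum
      apply hsum.congr
      intro n
      rw [hy0 n, Finset.sum_div]
    have hδW : Tendsto (fun n => δ n / w n L) atTop (nhds 0) := by
      apply squeeze_zero_norm' (a := fun n => e n * K)
      · rw [eventually_atTop]
        refine ⟨N₁, fun n hn => ?_⟩
        rw [norm_div, hdom n hn,
          div_le_iff₀ (hmpos n)]
        calc ‖δ n‖ ≤ e n * (K * m n) := hδb n
          _ = e n * K * m n := by ring
      · simpa using he0.mul_const K
    have hy1W : Tendsto (fun n => y (n + 1) / w n L) atTop (nhds (ξ L)) := by
      have hsum : Tendsto (fun n => (∑ i, ξ i * (w n i / w n L)) + (∑ i, c i) * (δ n / w n L))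
          atTop (nhds ((∑ i : Fin k, ξ i * if i = L then (1:ℂ) else 0) + (∑ i, c i) * 0)) := by
        apply Tendsto.add
        · exact tendsto_finset_sum _ fun i _ => (hsL i).const_mul (ξ i)
        · exact (hδW.const_mul _)
      have hval : ((∑ i : Fin k, ξ i * if i = L then (1:ℂ) else 0) + (∑ i, c i) * 0) = ξ L := by
        simp
      rw [hval] at hsum
      apply hsum.congr
      intro n
      rw [hy1 n]
      simp only [add_div, Finset.sum_div, mul_div_assoc]
    have hyne : ∀ᶠ n in atTop, y n ≠ 0 := by
      have h1 : ∀ᶠ n in atTop, y n / w n L ≠ 0 := hyW.eventually_ne one_ne_zero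
      filter_upwards [h1] with n hn h0
      apply hn
      rw [h0, zero_div]
    obtain ⟨N₃, hN₃⟩ := eventually_atTop.1 hyne
    refine ⟨L, ⟨N₃, hN₃⟩, ?_⟩
    have hfin := hy1W.div hyW one_ne_zero
    rw [div_one] at hfin
    apply hfin.congr'
    rw [EventuallyEq, eventually_atTop]
    refine ⟨max N₁ N₃, fun n hn => ?_⟩
    have h1 : w n L ≠ 0 := hWne n (le_trans (le_max_left _ _) hn)
    have h2 : y n ≠ 0 := hN₃ n (le_trans (le_max_right _ _) hn)
    rw [Pi.div_apply]
    field_simp
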